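/- Let Π be a HEF CNF theory, M a model of Π, and S the steady set of M for Π. If E ⊆ atom of the simplified theory (simpl(Π,M))_{M\S} is super-elementary for that simplified theory (elementary and non-outbound in its atom set), then E is erasable in M for Π, i.e., M \ E is a model of Π. -/
import Mathlib


structure Clause where
  head : Finset ℕ
  body : Finset ℕ
deriving DecidableEq

abbrev Theory := Finset Clause

/-- interpretation I satisfies clause c -/
def satC (I : Finset ℕ) (c : Clause) : Prop :=
  (c.head ∩ I).Nonempty ∨ ¬ c.body ⊆ I

def isModel (T : Theory) (I : Finset ℕ) : Prop := ∀ c ∈ T, satC I c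

def isMinModel (T : Theory) (I : Finset ℕ) : Prop :=
  isModel T I ∧ ∀ J ⊂ I, ¬ isModel T J

def Positive (T : Theory) : Prop := ∀ c ∈ T, c.head.Nonempty

def Horn (T : Theory) : Prop := ∀ c ∈ T, c.head.card = 1

/-- atoms occurring in a theory -/
def atoms (T : Theory) : Finset ℕ := T.biUnion (fun c => c.head ∪ c.body)

/-- c_{X←} : project head on X -/
def projHeadC (c : Clause) (X : Finset ℕ) : Clause := ⟨c.head ∩ X, c.body⟩
/-- c_X : project head and body on X -/
def projC (c : Clause) (X : Finset ℕ) : Clause := ⟨c.head ∩ X, c.body ∩ X⟩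

/-- Π_{X←} -/
def projHeadT (T : Theory) (X : Finset ℕ) : Theory :=
  (T.image (fun c => projHeadC c X)).filter (fun c => c.head.Nonempty)

/-- Π_X -/
def projT (T : Theory) (X : Finset ℕ) : Theory :=
  (T.image (fun c => projC c X)).filter (fun c => c.head.Nonempty)

/-- Π^{nd} : single-head fragment -/
def nd (T : Theory) : Theory := T.filter (fun c => c.head.card = 1)

/-- the steady set of M for Π is the minimal model of Π^{nd}_{M←} -/
def isSteady (T : Theory) (M S : Finset ℕ) : Prop :=
  isMinModel (nd (projHeadT T M)) S

def simpl (T : Theory) (M S : Finset ℕ) : Theory :=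
  T.filter (fun c => c.head ∩ S = ∅ ∧ c.body ⊆ M)

/-- simplified theory of Π w.r.t. M (with steady set S) -/
def simplT (T : Theory) (M S : Finset ℕ) : Theory := projT (simpl T M S) (M \ S)

/-- E erasable in M for T -/
def Erasable (T : Theory) (M E : Finset ℕ) : Prop :=
  E.Nonempty ∧ E ⊆ M ∧ isModel T (M \ E)

def Outbound (T : Theory) (Y Z : Finset ℕ) : Prop :=
  ∃ c ∈ T, (c.head ∩ Z).Nonempty ∧ (c.body ∩ (Y \ Z)).Nonempty ∧
    c.body ∩ Z = ∅ ∧ c.head ∩ (Y \ Z) = ∅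

def Elementary (T : Theory) (Y : Finset ℕ) : Prop :=
  Y.Nonempty ∧ Y ⊆ atoms T ∧ ∀ Z, Z ⊂ Y → Z.Nonempty → Outbound T Y Z

def HEF (T : Theory) : Prop :=
  ∀ c ∈ T, ∀ E, Elementary T E → (E ∩ c.head).card ≤ 1

def DisjunctiveSet (T : Theory) (S : Finset ℕ) : Prop :=
  ∃ c ∈ T, 1 < (c.head ∩ S).card

def SuperElementary (T : Theory) (X : Finset ℕ) : Prop :=
  Elementary T X ∧ ¬ Outbound T (atoms T) X

def posForm (T : Theory) (phi : ℕ) : Theory :=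
  T.filter (fun c => c.head.Nonempty) ∪
  (T.filter (fun c => c.head = ∅)).image (fun c => ⟨{phi}, c.body⟩) ∪
  (atoms T).image (fun a => ⟨{a}, {phi}⟩)

lemma inter_proj {A W Z : Finset ℕ} (h : Z ⊆ W) : (A ∩ W) ∩ Z = A ∩ Z := by
  rw [Finset.inter_assoc, Finset.inter_eq_right.mpr h]

lemma atoms_simplT_sub (T : Theory) (M S : Finset ℕ) :
    atoms (simplT T M S) ⊆ M \ S := by
  intro a ha
  simp only [atoms, Finset.mem_biUnion] at ha
  obtain ⟨d, hd, had⟩ := ha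
  simp only [simplT, projT, Finset.mem_filter, Finset.mem_image] at hd
  obtain ⟨⟨c, hc, rfl⟩, _⟩ := hd
  simp only [projC, Finset.mem_union, Finset.mem_inter] at had
  rcases had with ⟨_, h⟩ | ⟨_, h⟩ <;> exact h

lemma atoms_simplT_sub' (T : Theory) (M S : Finset ℕ) :
    atoms (simplT T M S) ⊆ atoms T := by
  intro a ha
  simp only [atoms, Finset.mem_biUnion] at ha ⊢
  obtain ⟨d, hd, had⟩ := ha
  simp only [simplT, projT, simpl, Finset.mem_filter, Finset.mem_image] at hd
  obtain ⟨⟨c, ⟨hc, _⟩, rfl⟩, _⟩ := hd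
  refine ⟨c, hc, ?_⟩
  simp only [projC, Finset.mem_union, Finset.mem_inter] at had ⊢
  rcases had with ⟨h, _⟩ | ⟨h, _⟩
  · exact Or.inl h
  · exact Or.inr h

theorem stmt13 (T : Theory) (M S E : Finset ℕ) (hHEF : HEF T) (hM : isModel T M)
    (hS : isSteady T M S) (hSM : S ⊆ M)
    (hE : E ⊆ atoms (simplT T M S)) (hse : SuperElementary (simplT T M S) E) :
    isModel T (M \ E) := by
  have hEMS : E ⊆ M \ S := hE.trans (atoms_simplT_sub T M S)
  -- E is elementary for T
  have helemT : Elementary T E := by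
    obtain ⟨⟨hEne, hEsub, hout⟩, _⟩ := hse
    refine ⟨hEne, hE.trans (atoms_simplT_sub' T M S), ?_⟩
    intro Z hZ hZne
    obtain ⟨d, hd, h1, h2, h3, h4⟩ := hout Z hZ hZne
    simp only [simplT, projT, simpl, Finset.mem_filter, Finset.mem_image] at hd
    obtain ⟨⟨c, ⟨hc, _, _⟩, rfl⟩, _⟩ := hd
    have hZsub : Z ⊆ M \ S := hZ.subset.trans hEMS
    have hEZsub : E \ Z ⊆ M \ S := Finset.sdiff_subset.trans hEMS
    simp only [projC] at h1 h2 h3 h4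
    rw [inter_proj hZsub] at h1 h3
    rw [inter_proj hEZsub] at h2 h4
    exact ⟨c, hc, h1, h2, h3, h4⟩
  intro c hc
  by_cases hb : c.body ⊆ M
  swap
  · exact Or.inr fun h => hb (h.trans Finset.sdiff_subset)
  by_cases hbe : (c.body ∩ E).Nonempty
  · right
    intro h
    obtain ⟨x, hx⟩ := hbe
    rw [Finset.mem_inter] at hx
    exact (Finset.mem_sdiff.mp (h hx.1)).2 hx.2
  by_cases hhs : (c.head ∩ S).Nonempty
  · left
    obtain ⟨a, ha⟩ := hhs
    rw [Finset.mem_inter] at ha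
    refine ⟨a, Finset.mem_inter.mpr ⟨ha.1, Finset.mem_sdiff.mpr ⟨hSM ha.2, fun haE => ?_⟩⟩⟩
    exact (Finset.mem_sdiff.mp (hEMS haE)).2 ha.2
  have hhs' : c.head ∩ S = ∅ := Finset.not_nonempty_iff_eq_empty.mp hhs
  have hheadM : (c.head ∩ M).Nonempty := by
    rcases hM c hc with h | h
    · exact h
    · exact absurd hb h
  have hheadMS : c.head ∩ M = c.head ∩ (M \ S) := by
    ext a
    simp only [Finset.mem_inter, Finset.mem_sdiff]
    constructor
    · rintro ⟨h1, h2⟩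
      refine ⟨h1, h2, fun hS' => ?_⟩
      have : a ∈ c.head ∩ S := Finset.mem_inter.mpr ⟨h1, hS'⟩
      simp [hhs'] at this
    · rintro ⟨h1, h2, _⟩
      exact ⟨h1, h2⟩
  by_cases hhe : (c.head ∩ (M \ E)).Nonempty
  · exact Or.inl hhe
  exfalso
  have hhe' : c.head ∩ M ⊆ E := by
    intro a ha
    rw [Finset.mem_inter] at ha
    by_contra haE
    exact hhe ⟨a, Finset.mem_inter.mpr ⟨ha.1, Finset.mem_sdiff.mpr ⟨ha.2, haE⟩⟩⟩
  set c' : Clause := projC c (M \ S) with hc'def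
  have hc'head : c'.head = c.head ∩ M := by
    simp only [hc'def, projC, ← hheadMS]
  have hc'mem : c' ∈ simplT T M S := by
    simp only [simplT, projT, Finset.mem_filter, Finset.mem_image]
    refine ⟨⟨c, ?_, rfl⟩, ?_⟩
    · simp only [simpl, Finset.mem_filter]
      exact ⟨hc, hhs', hb⟩
    · show (c.head ∩ (M \ S)).Nonempty
      rw [← hheadMS]; exact hheadM
  -- the body of c' is empty, by non-outboundness
  have hcbodyMS : c.body ∩ (M \ S) = ∅ := by
    rw [← Finset.subset_empty]
    intro x hx
    exfalso
    have hxbody : x ∈ c.body := (Finset.mem_inter.mp hx).1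
    have hxY : x ∈ atoms (simplT T M S) := by
      simp only [atoms, Finset.mem_biUnion]
      refine ⟨c', hc'mem, Finset.mem_union.mpr (Or.inr ?_)⟩
      simpa only [hc'def, projC] using hx
    have hxE : x ∉ E := fun h => hbe ⟨x, Finset.mem_inter.mpr ⟨hxbody, h⟩⟩
    refine hse.2 ⟨c', hc'mem, ?_, ⟨x, ?_⟩, ?_, ?_⟩
    · rw [hc'head, Finset.inter_eq_left.mpr hhe']
      exact hheadM
    · refine Finset.mem_inter.mpr ⟨?_, Finset.mem_sdiff.mpr ⟨hxY, hxE⟩⟩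
      simpa only [hc'def, projC] using hx
    · rw [← Finset.subset_empty]
      intro y hy
      rw [Finset.mem_inter] at hy
      have : y ∈ c.body := by
        have := hy.1
        simp only [hc'def, projC, Finset.mem_inter] at this
        exact this.1
      exact absurd ⟨y, Finset.mem_inter.mpr ⟨this, hy.2⟩⟩ hbe
    · rw [← Finset.subset_empty]
      intro y hy
      rw [Finset.mem_inter, Finset.mem_sdiff] at hy
      exact absurd (hhe' (hc'head ▸ hy.1)) hy.2.2
  have hbodyS : c.body ⊆ S := by
    intro x hx
    by_contra hxS
    have : x ∈ c.body ∩ (M \ S) :=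
      Finset.mem_inter.mpr ⟨hx, Finset.mem_sdiff.mpr ⟨hb hx, hxS⟩⟩
    simp [hcbodyMS] at this
  -- by HEF, c.head ∩ M is a singleton
  have hcard : (E ∩ c.head).card ≤ 1 := hHEF c hc E helemT
  have hsub : c.head ∩ M ⊆ E ∩ c.head := fun a ha =>
    Finset.mem_inter.mpr ⟨hhe' ha, (Finset.mem_inter.mp ha).1⟩
  have hcard1 : (c.head ∩ M).card = 1 :=
    le_antisymm ((Finset.card_le_card hsub).trans hcard)
      (Finset.card_pos.mpr hheadM)
  obtain ⟨a, ha⟩ := Finset.card_eq_one.mp hcard1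
  -- the clause {a} ← body is in nd (projHeadT T M), contradicting steadiness
  have hndmem : projHeadC c M ∈ nd (projHeadT T M) := by
    simp only [nd, projHeadT, Finset.mem_filter, Finset.mem_image]
    exact ⟨⟨⟨c, hc, rfl⟩, by rw [projHeadC]; exact hheadM⟩,
      by rw [projHeadC]; exact hcard1⟩
  rcases hS.1 _ hndmem with h | h
  · obtain ⟨x, hx⟩ := h
    simp only [projHeadC, ha, Finset.mem_inter, Finset.mem_singleton] at hx
    obtain ⟨rfl, hxS⟩ := hx
    have hahead : x ∈ c.head := by
      have : x ∈ c.head ∩ M := ha ▸ Finset.mem_singleton_self x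
      exact (Finset.mem_inter.mp this).1
    have : x ∈ c.head ∩ S := Finset.mem_inter.mpr ⟨hahead, hxS⟩
    simp [hhs'] at this
  · exact h hbodyS
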